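/- arXiv:1202.0803 — 2 statements merged into one kernel-verified Lean document; each statement's English description precedes it below -/
import Mathlib

section
/- For every bounded measurable f : Ω → ℝ one has (∫_Ω V(ω) f(ω) d𝒫(ω))² ≤ 2 C_u · ∫_Ω f(ω)(−Lf)(ω) d𝒫(ω), i.e. the local drift V belongs to the space H_{−1} associated with the Dirichlet form of L. (Lemma 2.5 of the paper.) -/
open MeasureTheory

/-- The unit vectors of `ℤ^d`, indexed by a coordinate and a sign. -/
def unitVec (d : ℕ) (p : Fin d × Bool) : Fin d → ℤ :=
  Pi.single p.1 (if p.2 then 1 else -1)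

/-- The spatial part of the generator of the environment seen from the particle:
`Lf(ω) = ∑_{|y|=1} a_y(ω) (f(τ_y ω) − f(ω))`. -/
def genL {Ω : Type*} (d : ℕ) (τ : (Fin d → ℤ) → Ω → Ω)
    (a : (Fin d → ℤ) → Ω → ℝ) (f : Ω → ℝ) (ω : Ω) : ℝ :=
  ∑ p : Fin d × Bool, a (unitVec d p) ω * (f (τ (unitVec d p) ω) - f ω)

private lemma intBdd {Ω : Type*} [MeasurableSpace Ω] {μ : Measure Ω} [IsFiniteMeasure μ]
    {g : Ω → ℝ} (hg : Measurable g) (h : ∃ C, ∀ ω, |g ω| ≤ C) : Integrable g μ := by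
  obtain ⟨C, hC⟩ := h
  exact (integrable_const C).mono' hg.aestronglyMeasurable
    (Filter.Eventually.of_forall fun ω => by simpa [Real.norm_eq_abs] using hC ω)

private lemma bddMul {Ω : Type*} {g h : Ω → ℝ} (h1 : ∃ C, ∀ ω, |g ω| ≤ C)
    (h2 : ∃ C, ∀ ω, |h ω| ≤ C) : ∃ C, ∀ ω, |g ω * h ω| ≤ C := by
  obtain ⟨C1, h1⟩ := h1; obtain ⟨C2, h2⟩ := h2
  refine ⟨max C1 0 * max C2 0, fun ω => ?_⟩
  rw [abs_mul]
  exact mul_le_mul ((h1 ω).trans (le_max_left _ _)) ((h2 ω).trans (le_max_left _ _))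
    (abs_nonneg _) ((abs_nonneg _).trans ((h1 ω).trans (le_max_left _ _)))

private lemma bddSub {Ω : Type*} {g h : Ω → ℝ} (h1 : ∃ C, ∀ ω, |g ω| ≤ C)
    (h2 : ∃ C, ∀ ω, |h ω| ≤ C) : ∃ C, ∀ ω, |g ω - h ω| ≤ C := by
  obtain ⟨C1, h1⟩ := h1; obtain ⟨C2, h2⟩ := h2
  exact ⟨C1 + C2, fun ω => (abs_sub _ _).trans (add_le_add (h1 ω) (h2 ω))⟩

/-- Cauchy–Schwarz with weight `a ≥ 0`, via the quadratic-discriminant trick. -/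
private lemma cs_aux {Ω : Type*} [MeasurableSpace Ω] (μ : Measure Ω)
    (a g : Ω → ℝ) (ha : Integrable a μ)
    (hag : Integrable (fun ω => a ω * g ω) μ)
    (hag2 : Integrable (fun ω => a ω * g ω ^ 2) μ)
    (hpos : ∀ ω, 0 ≤ a ω) :
    (∫ ω, a ω * g ω ∂μ) ^ 2 ≤ (∫ ω, a ω ∂μ) * ∫ ω, a ω * g ω ^ 2 ∂μ := by
  set X := ∫ ω, a ω * g ω ^ 2 ∂μ with hXdef
  set S := ∫ ω, a ω * g ω ∂μ with hSdef
  set A := ∫ ω, a ω ∂μ with hAdef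
  have key : ∀ t : ℝ, 0 ≤ X * (t * t) + (2 * S) * t + A := by
    intro t
    have h1 : (fun ω => t ^ 2 * (a ω * g ω ^ 2) + 2 * t * (a ω * g ω) + a ω)
        = fun ω => a ω * (t * g ω + 1) ^ 2 := by funext ω; ring
    have i1 : Integrable (fun ω => t ^ 2 * (a ω * g ω ^ 2)) μ := hag2.const_mul _
    have i2 : Integrable (fun ω => 2 * t * (a ω * g ω)) μ := hag.const_mul _
    have h2 : ∫ ω, (t ^ 2 * (a ω * g ω ^ 2) + 2 * t * (a ω * g ω) + a ω) ∂μ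
        = t ^ 2 * X + 2 * t * S + A := by
      have i12 : Integrable (fun ω => t ^ 2 * (a ω * g ω ^ 2) + 2 * t * (a ω * g ω)) μ :=
        i1.add i2
      rw [integral_add i12 ha, integral_add i1 i2, integral_const_mul, integral_const_mul]
    have h3 : 0 ≤ ∫ ω, a ω * (t * g ω + 1) ^ 2 ∂μ :=
      integral_nonneg fun ω => mul_nonneg (hpos ω) (sq_nonneg _)
    rw [← h1, h2] at h3
    nlinarith [h3]
  have hd := discrim_le_zero key
  rw [discrim] at hd
  nlinarith [hd]

/-- Lemma 2.5: `(∫ V f d𝒫)² ≤ 2 C_u ⟨f, (−L) f⟩`, i.e. the local drift `V = a_e − a_{−e}`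
belongs to `H_{−1}`. -/
theorem stmt4
    (d : ℕ) (hd : 1 ≤ d)
    {Ω : Type*} [MeasurableSpace Ω] (μ : Measure Ω) [IsProbabilityMeasure μ]
    (τ : (Fin d → ℤ) → Ω → Ω)
    (hτ_add : ∀ x y, τ (x + y) = τ x ∘ τ y) (hτ_zero : τ 0 = id)
    (hτ_mp : ∀ x, MeasurePreserving (τ x) μ μ)
    (Cl Cu : ℝ) (hCl : 0 < Cl) (hClCu : Cl ≤ Cu)
    (a : (Fin d → ℤ) → Ω → ℝ)
    (ha_meas : ∀ y : Fin d → ℤ, (∑ i, |y i|) = 1 → Measurable (a y))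
    (ha_lb : ∀ y : Fin d → ℤ, (∑ i, |y i|) = 1 → ∀ ω, Cl ≤ a y ω)
    (ha_ub : ∀ y : Fin d → ℤ, (∑ i, |y i|) = 1 → ∀ ω, a y ω ≤ Cu)
    (ha_cov : ∀ y : Fin d → ℤ, (∑ i, |y i|) = 1 → ∀ ω, a (-y) ω = a y (τ (-y) ω))
    (j : Fin d)
    (f : Ω → ℝ) (hf_meas : Measurable f) (hf_bdd : ∃ M, ∀ ω, |f ω| ≤ M) :
    (∫ ω, (a (Pi.single j 1) ω - a (-Pi.single j 1) ω) * f ω ∂μ) ^ 2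
      ≤ 2 * Cu * ∫ ω, f ω * (-(genL d τ a f ω)) ∂μ := by
  obtain ⟨M0, hM0⟩ := hf_bdd
  set M := max M0 0 with hMdef
  have hM : ∀ ω, |f ω| ≤ M := fun ω => (hM0 ω).trans (le_max_left _ _)
  have hCu : (0:ℝ) < Cu := lt_of_lt_of_le hCl hClCu
  -- inverse properties of τ
  have hτinv : ∀ (y : Fin d → ℤ) ω, τ (-y) (τ y ω) = ω := by
    intro y ω
    have h := hτ_add (-y) y
    rw [neg_add_cancel, hτ_zero] at h
    exact (congrFun h ω).symm
  have hτinv' : ∀ (y : Fin d → ℤ) ω, τ y (τ (-y) ω) = ω := by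
    intro y ω
    have h := hτ_add y (-y)
    rw [add_neg_cancel, hτ_zero] at h
    exact (congrFun h ω).symm
  -- change of variables
  have hCOV : ∀ (y : Fin d → ℤ) (g : Ω → ℝ), ∫ ω, g (τ y ω) ∂μ = ∫ ω, g ω ∂μ := by
    intro y g
    have hemb : MeasurableEmbedding (τ y) :=
      MeasurableEquiv.measurableEmbedding
        { toEquiv := ⟨τ y, τ (-y), fun ω => hτinv y ω, fun ω => hτinv' y ω⟩
          measurable_toFun := (hτ_mp y).measurable
          measurable_invFun := (hτ_mp (-y)).measurable }
    exact (hτ_mp y).integral_comp hemb g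
  -- unit vectors
  set E : Fin d → (Fin d → ℤ) := fun i => Pi.single i 1 with hEdef
  have hunit : ∀ i : Fin d, (∑ k, |(E i) k|) = 1 := by
    intro i
    rw [Finset.sum_eq_single i] <;> simp +contextual [hEdef, Pi.single_apply]
  have hunit' : ∀ i : Fin d, (∑ k, |(-(E i)) k|) = 1 := by
    intro i
    simp only [Pi.neg_apply, abs_neg]
    exact hunit i
  have huvt : ∀ i : Fin d, unitVec d (i, true) = E i := fun i => rfl
  have huvf : ∀ i : Fin d, unitVec d (i, false) = -(E i) := by
    intro i
    funext k
    simp [unitVec, hEdef, Pi.single_apply, apply_ite Neg.neg]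
  -- boundedness/measurability of a on unit vectors
  have habs : ∀ (y : Fin d → ℤ), (∑ i, |y i|) = 1 → ∀ ω, |a y ω| ≤ Cu := by
    intro y hy ω
    rw [abs_of_pos (lt_of_lt_of_le hCl (ha_lb y hy ω))]
    exact ha_ub y hy ω
  have hfτ_meas : ∀ y : Fin d → ℤ, Measurable (fun ω => f (τ y ω)) :=
    fun y => hf_meas.comp (hτ_mp y).measurable
  -- generic integrability
  have hint : ∀ (y : Fin d → ℤ), (∑ i, |y i|) = 1 → ∀ (g : Ω → ℝ), Measurable g →
      (∃ C, ∀ ω, |g ω| ≤ C) → Integrable (fun ω => a y ω * g ω) μ := by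
    intro y hy g hg hb
    exact intBdd ((ha_meas y hy).mul hg) (bddMul ⟨Cu, habs y hy⟩ hb)
  have hbf : ∃ C, ∀ ω, |f ω| ≤ C := ⟨M, hM⟩
  have hbfτ : ∀ y : Fin d → ℤ, ∃ C, ∀ ω, |f (τ y ω)| ≤ C := fun y => ⟨M, fun ω => hM _⟩
  -- integrability of the summands of f·(−Lf)
  have hintT : ∀ (y : Fin d → ℤ), (∑ i, |y i|) = 1 →
      Integrable (fun ω => a y ω * (f ω * (f ω - f (τ y ω)))) μ :=
    fun y hy => hint y hy _ (hf_meas.mul (hf_meas.sub (hfτ_meas y)))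
      (bddMul hbf (bddSub hbf (hbfτ y)))
  have hintT' : ∀ (y : Fin d → ℤ), (∑ i, |y i|) = 1 →
      Integrable (fun ω => a y ω * (f (τ y ω) * (f (τ y ω) - f ω))) μ :=
    fun y hy => hint y hy _ ((hfτ_meas y).mul ((hfτ_meas y).sub hf_meas))
      (bddMul (hbfτ y) (bddSub (hbfτ y) hbf))
  have hintSq : ∀ (y : Fin d → ℤ), (∑ i, |y i|) = 1 →
      Integrable (fun ω => a y ω * (f (τ y ω) - f ω) ^ 2) μ := by
    intro y hy
    refine hint y hy _ (((hfτ_meas y).sub hf_meas).pow_const 2) ?_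
    obtain ⟨C, hC⟩ := bddMul (bddSub (hbfτ y) hbf) (bddSub (hbfτ y) hbf)
    exact ⟨C, fun ω => by rw [sq]; exact hC ω⟩
  -- Step 1: pointwise expansion of f·(−Lf)
  have hpt : ∀ ω, f ω * (-(genL d τ a f ω))
      = ∑ p : Fin d × Bool, a (unitVec d p) ω * (f ω * (f ω - f (τ (unitVec d p) ω))) := by
    intro ω
    rw [genL, ← Finset.sum_neg_distrib, Finset.mul_sum]
    exact Finset.sum_congr rfl fun p _ => by ring
  have hnorm_uv : ∀ p : Fin d × Bool, (∑ i, |(unitVec d p) i|) = 1 := by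
    rintro ⟨i, b⟩
    cases b
    · rw [huvf]; exact hunit' i
    · rw [huvt]; exact hunit i
  -- Step 2: the Dirichlet form identity
  have hD : ∫ ω, f ω * (-(genL d τ a f ω)) ∂μ
      = ∑ i : Fin d, ∫ ω, a (E i) ω * (f (τ (E i) ω) - f ω) ^ 2 ∂μ := by
    have h1 : ∫ ω, f ω * (-(genL d τ a f ω)) ∂μ
        = ∑ p : Fin d × Bool,
            ∫ ω, a (unitVec d p) ω * (f ω * (f ω - f (τ (unitVec d p) ω))) ∂μ := by
      rw [integral_congr_ae (Filter.Eventually.of_forall hpt)]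
      exact integral_finset_sum _ fun p _ => hintT _ (hnorm_uv p)
    rw [h1, Fintype.sum_prod_type]
    refine Finset.sum_congr rfl fun i _ => ?_
    rw [Fintype.sum_bool, huvt, huvf]
    -- change of variables on the negative-direction term
    have h2 : ∫ ω, a (-(E i)) ω * (f ω * (f ω - f (τ (-(E i)) ω))) ∂μ
        = ∫ ω, a (E i) ω * (f (τ (E i) ω) * (f (τ (E i) ω) - f ω)) ∂μ := by
      have h4 : ∫ ω, a (E i) (τ (-(E i)) ω)
            * (f (τ (E i) (τ (-(E i)) ω)) * (f (τ (E i) (τ (-(E i)) ω)) - f (τ (-(E i)) ω))) ∂μ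
          = ∫ ω, a (E i) ω * (f (τ (E i) ω) * (f (τ (E i) ω) - f ω)) ∂μ :=
        hCOV (-(E i)) (fun ω' => a (E i) ω' * (f (τ (E i) ω') * (f (τ (E i) ω') - f ω')))
      refine Eq.trans ?_ h4
      refine integral_congr_ae (Filter.Eventually.of_forall fun ω => ?_)
      simp only [hτinv', ha_cov (E i) (hunit i)]
    rw [h2]
    calc ∫ ω, a (E i) ω * (f ω * (f ω - f (τ (E i) ω))) ∂μ
          + ∫ ω, a (E i) ω * (f (τ (E i) ω) * (f (τ (E i) ω) - f ω)) ∂μ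
        = ∫ ω, (a (E i) ω * (f ω * (f ω - f (τ (E i) ω)))
            + a (E i) ω * (f (τ (E i) ω) * (f (τ (E i) ω) - f ω))) ∂μ :=
          (integral_add (hintT _ (hunit i)) (hintT' _ (hunit i))).symm
      _ = ∫ ω, a (E i) ω * (f (τ (E i) ω) - f ω) ^ 2 ∂μ :=
          integral_congr_ae (Filter.Eventually.of_forall fun ω => by ring)
  -- each Dirichlet summand is nonnegative
  have hDnn : ∀ i : Fin d, 0 ≤ ∫ ω, a (E i) ω * (f (τ (E i) ω) - f ω) ^ 2 ∂μ :=
    fun i => integral_nonneg fun ω =>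
      mul_nonneg (le_trans hCl.le (ha_lb _ (hunit i) ω)) (sq_nonneg _)
  have hDj : ∫ ω, a (E j) ω * (f (τ (E j) ω) - f ω) ^ 2 ∂μ
      ≤ ∫ ω, f ω * (-(genL d τ a f ω)) ∂μ := by
    rw [hD]
    exact Finset.single_le_sum (fun i _ => hDnn i) (Finset.mem_univ j)
  have hRnn : 0 ≤ ∫ ω, f ω * (-(genL d τ a f ω)) ∂μ := le_trans (hDnn j) hDj
  -- Step 3: rewrite the drift integral
  have hS : ∫ ω, (a (Pi.single j 1) ω - a (-Pi.single j 1) ω) * f ω ∂μ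
      = -∫ ω, a (E j) ω * (f (τ (E j) ω) - f ω) ∂μ := by
    have h1 : ∀ ω, (a (Pi.single j 1) ω - a (-Pi.single j 1) ω) * f ω
        = a (E j) ω * f ω - a (-(E j)) ω * f ω := by
      intro ω; rw [hEdef]; ring
    rw [integral_congr_ae (Filter.Eventually.of_forall h1),
      integral_sub (hint _ (hunit j) f hf_meas hbf) (hint _ (hunit' j) f hf_meas hbf)]
    have h2 : ∫ ω, a (-(E j)) ω * f ω ∂μ = ∫ ω, a (E j) ω * f (τ (E j) ω) ∂μ := by
      have h4 : ∫ ω, a (E j) (τ (-(E j)) ω) * f (τ (E j) (τ (-(E j)) ω)) ∂μ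
          = ∫ ω, a (E j) ω * f (τ (E j) ω) ∂μ :=
        hCOV (-(E j)) (fun ω' => a (E j) ω' * f (τ (E j) ω'))
      refine Eq.trans ?_ h4
      refine integral_congr_ae (Filter.Eventually.of_forall fun ω => ?_)
      simp only [hτinv', ha_cov (E j) (hunit j)]
    rw [h2]
    calc (∫ ω, a (E j) ω * f ω ∂μ) - ∫ ω, a (E j) ω * f (τ (E j) ω) ∂μ
        = ∫ ω, (a (E j) ω * f ω - a (E j) ω * f (τ (E j) ω)) ∂μ :=
          (integral_sub (hint _ (hunit j) f hf_meas hbf)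
            (hint _ (hunit j) _ (hfτ_meas _) (hbfτ _))).symm
      _ = ∫ ω, -(a (E j) ω * (f (τ (E j) ω) - f ω)) ∂μ :=
          integral_congr_ae (Filter.Eventually.of_forall fun ω => by ring)
      _ = -∫ ω, a (E j) ω * (f (τ (E j) ω) - f ω) ∂μ := integral_neg _
  -- Step 4: Cauchy–Schwarz
  have hintg : Integrable (fun ω => a (E j) ω * (f (τ (E j) ω) - f ω)) μ :=
    hint _ (hunit j) _ ((hfτ_meas _).sub hf_meas) (bddSub (hbfτ _) hbf)
  have hcs := cs_aux μ (a (E j)) (fun ω => f (τ (E j) ω) - f ω)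
    (intBdd (ha_meas _ (hunit j)) ⟨Cu, habs _ (hunit j)⟩) hintg (hintSq _ (hunit j))
    (fun ω => le_trans hCl.le (ha_lb _ (hunit j) ω))
  have hA : ∫ ω, a (E j) ω ∂μ ≤ Cu := by
    calc ∫ ω, a (E j) ω ∂μ ≤ ∫ _, Cu ∂μ :=
          integral_mono (intBdd (ha_meas _ (hunit j)) ⟨Cu, habs _ (hunit j)⟩)
            (integrable_const Cu) (fun ω => ha_ub _ (hunit j) ω)
      _ = Cu := by simp
  have hXnn : 0 ≤ ∫ ω, a (E j) ω * (f (τ (E j) ω) - f ω) ^ 2 ∂μ := by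
    exact integral_nonneg fun ω =>
      mul_nonneg (le_trans hCl.le (ha_lb _ (hunit j) ω)) (sq_nonneg _)
  calc (∫ ω, (a (Pi.single j 1) ω - a (-Pi.single j 1) ω) * f ω ∂μ) ^ 2
      = (∫ ω, a (E j) ω * (f (τ (E j) ω) - f ω) ∂μ) ^ 2 := by rw [hS]; ring
    _ ≤ (∫ ω, a (E j) ω ∂μ) * ∫ ω, a (E j) ω * (f (τ (E j) ω) - f ω) ^ 2 ∂μ := hcs
    _ ≤ Cu * ∫ ω, a (E j) ω * (f (τ (E j) ω) - f ω) ^ 2 ∂μ :=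
        mul_le_mul_of_nonneg_right hA hXnn
    _ ≤ Cu * ∫ ω, f ω * (-(genL d τ a f ω)) ∂μ :=
        mul_le_mul_of_nonneg_left hDj hCu.le
    _ ≤ 2 * Cu * ∫ ω, f ω * (-(genL d τ a f ω)) ∂μ := by nlinarith
end

section
/- Let H be a real inner product space, A : H → H a linear map, V ∈ H, and λ, λ' > 0. If u, u' ∈ H satisfy λu − Au = V and λ'u' − Au' = V, then ⟨u − u', −A(u − u')⟩ ≤ ((√λ + √λ')² / 2) · (‖u‖² + ‖u'‖²). (Inequality (3.2) in the proof of Proposition 3.1 of the paper, bounding the H₁-norm of differences of resolvents.) -/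
open scoped InnerProductSpace

/-- Inequality (3.2) in the proof of Proposition 3.1: if `u, u'` solve the resolvent
equations `λu − Au = V` and `λ'u' − Au' = V`, then
`⟨u − u', −A(u − u')⟩ ≤ ((√λ + √λ')²/2) (‖u‖² + ‖u'‖²)`. -/
theorem stmt10 {H : Type*} [NormedAddCommGroup H] [InnerProductSpace ℝ H]
    (A : H →ₗ[ℝ] H) (V u u' : H) (lam lam' : ℝ) (hlam : 0 < lam) (hlam' : 0 < lam')
    (hu : lam • u - A u = V) (hu' : lam' • u' - A u' = V) :
    ⟪u - u', -(A (u - u'))⟫_ℝ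
      ≤ (Real.sqrt lam + Real.sqrt lam') ^ 2 / 2 * (‖u‖ ^ 2 + ‖u'‖ ^ 2) := by
  have hAu : A u = lam • u - V := by rw [← hu]; abel
  have hAu' : A u' = lam' • u' - V := by rw [← hu']; abel
  have hA : A (u - u') = lam • u - lam' • u' := by
    rw [map_sub, hAu, hAu']; abel
  rw [hA]
  have h1 : ⟪u, u'⟫_ℝ ≤ ‖u‖ * ‖u'‖ := real_inner_le_norm u u'
  have h2 : ⟪u, u⟫_ℝ = ‖u‖ ^ 2 := real_inner_self_eq_norm_sq u
  have h3 : ⟪u', u'⟫_ℝ = ‖u'‖ ^ 2 := real_inner_self_eq_norm_sq u'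
  have hc : ⟪u', u⟫_ℝ = ⟪u, u'⟫_ℝ := (real_inner_comm u u')
  have hs : Real.sqrt lam ^ 2 = lam := Real.sq_sqrt hlam.le
  have hs' : Real.sqrt lam' ^ 2 = lam' := Real.sq_sqrt hlam'.le
  simp only [inner_neg_right, inner_sub_left, inner_sub_right, real_inner_smul_right]
  nlinarith [sq_nonneg (‖u‖ - ‖u'‖), sq_nonneg (‖u‖ + ‖u'‖),
    Real.sqrt_nonneg lam, Real.sqrt_nonneg lam',
    mul_nonneg (Real.sqrt_nonneg lam) (Real.sqrt_nonneg lam'),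
    norm_nonneg u, norm_nonneg u', sq_nonneg ‖u‖, sq_nonneg ‖u'‖,
    mul_nonneg (mul_nonneg (Real.sqrt_nonneg lam) (Real.sqrt_nonneg lam')) (sq_nonneg (‖u‖ - ‖u'‖))]
end
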